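/- In the convex homogeneous setup, for every q ∈ E with q ≠ 0 there exists a unique p₀ ∈ N such that ∇f p₀ = T • q for some T > 0; moreover sSup { ⟪p, q⟫ | p ∈ N } = ⟪p₀, q⟫. (Section 3.2: the homogeneous Legendre transform satisfies Lf(q) = sup_{p∈N} ⟨p,q⟩ = ⟨p₀,q⟩ for the unique p₀ ∈ N whose Gauss normal n(p₀) is positively proportional to q.) -/

import Mathlib

open scoped RealInnerProductSpace

/-- **Section 3.2.** In the convex homogeneous setup, for every `q ≠ 0` there is a unique
`p₀ ∈ N = f⁻¹(1)` whose normal `∇f p₀` is positively proportional to `q`, and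
`sup_{p ∈ N} ⟨p, q⟩ = ⟨p₀, q⟩`. -/
theorem legendre_sup_attained (d : ℕ) (hd : 1 ≤ d)
    (f : EuclideanSpace ℝ (Fin d) → ℝ)
    (gradf : EuclideanSpace ℝ (Fin d) → EuclideanSpace ℝ (Fin d))
    (hf_cont : Continuous f)
    (hf_hom : ∀ t : ℝ, 0 < t → ∀ x, f (t • x) = t * f x)
    (hf_pos : ∀ x : EuclideanSpace ℝ (Fin d), x ≠ 0 → 0 < f x)
    (hf_grad : ∀ x : EuclideanSpace ℝ (Fin d), x ≠ 0 → HasGradientAt f (gradf x) x)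
    (hgrad_cont : ContinuousOn gradf {x : EuclideanSpace ℝ (Fin d) | x ≠ 0})
    (hconv : StrictConvex ℝ {x : EuclideanSpace ℝ (Fin d) | f x ≤ 1})
    (q : EuclideanSpace ℝ (Fin d)) (hq : q ≠ 0) :
    ∃ p₀ : EuclideanSpace ℝ (Fin d),
      (f p₀ = 1 ∧ ∃ T : ℝ, 0 < T ∧ gradf p₀ = T • q) ∧
      (∀ p : EuclideanSpace ℝ (Fin d),
        (f p = 1 ∧ ∃ T : ℝ, 0 < T ∧ gradf p = T • q) → p = p₀) ∧
      sSup {r : ℝ | ∃ p, f p = 1 ∧ r = ⟪p, q⟫} = ⟪p₀, q⟫ := by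
  classical
  haveI : Nonempty (Fin d) := ⟨⟨0, hd⟩⟩
  -- basic facts
  have hf0 : f 0 = 0 := by
    have h := hf_hom 2 two_pos 0
    rw [smul_zero] at h; linarith
  have hN0 : ∀ p : EuclideanSpace ℝ (Fin d), f p = 1 → p ≠ 0 := by
    intro p hp h0; rw [h0, hf0] at hp; norm_num at hp
  have hscale : ∀ x : EuclideanSpace ℝ (Fin d), x ≠ 0 → f ((f x)⁻¹ • x) = 1 := by
    intro x hx
    rw [hf_hom _ (inv_pos.2 (hf_pos x hx)) x, inv_mul_cancel₀ (ne_of_gt (hf_pos x hx))]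
  -- compactness of N
  have hNc : IsCompact {x : EuclideanSpace ℝ (Fin d) | f x = 1} := by
    obtain ⟨z, hz, hzmin⟩ := (isCompact_sphere (0 : EuclideanSpace ℝ (Fin d)) 1).exists_isMinOn
      (NormedSpace.sphere_nonempty.2 zero_le_one) hf_cont.continuousOn
    have hz0 : z ≠ 0 := by
      intro h; rw [mem_sphere_zero_iff_norm, h, norm_zero] at hz; norm_num at hz
    have hm : 0 < f z := hf_pos z hz0
    apply Metric.isCompact_of_isClosed_isBounded
    · exact isClosed_eq hf_cont continuous_const
    · refine (Metric.isBounded_closedBall (x := (0 : EuclideanSpace ℝ (Fin d)))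
        (r := (f z)⁻¹)).subset ?_
      intro x hx
      have hx1 : f x = 1 := hx
      have hx0 : x ≠ 0 := by intro h; rw [h, hf0] at hx1; norm_num at hx1
      have hnx : (0:ℝ) < ‖x‖ := norm_pos_iff.mpr hx0
      have hu : (‖x‖⁻¹ • x) ∈ Metric.sphere (0 : EuclideanSpace ℝ (Fin d)) 1 := by
        rw [mem_sphere_zero_iff_norm, norm_smul, norm_inv, norm_norm]
        field_simp
      have h1 : f z ≤ f (‖x‖⁻¹ • x) := hzmin hu
      have h2 : f (‖x‖⁻¹ • x) = ‖x‖⁻¹ * f x := hf_hom _ (inv_pos.2 hnx) x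
      rw [mem_closedBall_zero_iff]
      rw [h2, hx1, mul_one] at h1
      rw [le_inv_comm₀ hm hnx] at h1
      exact h1
  -- N is nonempty
  have hNne : {x : EuclideanSpace ℝ (Fin d) | f x = 1}.Nonempty := by
    have hx1 : (EuclideanSpace.single (⟨0, hd⟩ : Fin d) (1:ℝ)) ≠ 0 := by
      intro h
      have := congrArg (fun v : EuclideanSpace ℝ (Fin d) => v ⟨0, hd⟩) h
      simp at this
    exact ⟨_, hscale _ hx1⟩
  -- maximizer of ⟪q, ·⟫ on N
  obtain ⟨p₀, hp₀N, hp₀max⟩ := hNc.exists_isMaxOn hNne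
    ((continuous_const.inner continuous_id).continuousOn :
      ContinuousOn (fun p : EuclideanSpace ℝ (Fin d) => ⟪q, p⟫) _)
  have hp₀N' : f p₀ = 1 := hp₀N
  have hp₀0 : p₀ ≠ 0 := hN0 _ hp₀N'
  -- positivity of the max value
  have hM : 0 < ⟪q, p₀⟫ := by
    have hqN : f ((f q)⁻¹ • q) = 1 := hscale q hq
    have h1 : ⟪q, (f q)⁻¹ • q⟫ ≤ ⟪q, p₀⟫ := hp₀max hqN
    have h2 : (0:ℝ) < ⟪q, (f q)⁻¹ • q⟫ := by
      rw [real_inner_smul_right]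
      refine mul_pos (inv_pos.2 (hf_pos q hq)) ?_
      rw [real_inner_self_eq_norm_sq]
      exact pow_pos (norm_pos_iff.mpr hq) 2
    linarith
  -- Euler identity on N
  have euler : ∀ p : EuclideanSpace ℝ (Fin d), f p = 1 → ⟪gradf p, p⟫ = 1 := by
    intro p hp
    have hp0 : p ≠ 0 := hN0 p hp
    have hF := (hf_grad p hp0).hasFDerivAt
    have hs : HasDerivAt (fun t : ℝ => t • p) p 1 := by
      simpa using (hasDerivAt_id (1:ℝ)).smul_const p
    have h2 : HasDerivAt (fun t : ℝ => f (t • p)) (⟪gradf p, p⟫) 1 := by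
      have := (show HasFDerivAt f _ ((1:ℝ) • p) by simpa using hF).comp_hasDerivAt 1 hs
      simp [InnerProductSpace.toDual_apply_apply] at this; exact this
    have h3 : HasDerivAt (fun t : ℝ => f (t • p)) 1 1 := by
      refine (hasDerivAt_id (1:ℝ)).congr_of_eventuallyEq ?_
      filter_upwards [eventually_gt_nhds (zero_lt_one)] with t ht
      rw [hf_hom t ht p, hp, mul_one]; rfl
    exact h2.unique h3
  -- supporting halfspace property of the gradient
  have support : ∀ p : EuclideanSpace ℝ (Fin d), f p = 1 →
      ∀ y : EuclideanSpace ℝ (Fin d), f y ≤ 1 → ⟪gradf p, y⟫ ≤ ⟪gradf p, p⟫ := by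
    intro p hp y hy
    have hp0 : p ≠ 0 := hN0 p hp
    have hF := (hf_grad p hp0).hasFDerivAt
    have hc : HasDerivAt (fun t : ℝ => p + t • (y - p)) (y - p) 0 := by
      simpa using ((hasDerivAt_id (0:ℝ)).smul_const (y - p)).const_add p
    have h2 : HasDerivAt (fun t : ℝ => f (p + t • (y - p))) (⟪gradf p, y - p⟫) 0 := by
      have := (show HasFDerivAt f _ (p + (0:ℝ) • (y - p)) by simpa using hF).comp_hasDerivAt 0 hc
      simp [InnerProductSpace.toDual_apply_apply] at this; exact this
    have hK : Convex ℝ {x : EuclideanSpace ℝ (Fin d) | f x ≤ 1} := hconv.convex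
    have hseg : ∀ t ∈ Set.Ioo (0:ℝ) 1, f (p + t • (y - p)) ≤ 1 := by
      intro t ht
      have hmem := hK (Set.mem_setOf.2 hp.le) (Set.mem_setOf.2 hy)
        (by linarith [ht.2] : (0:ℝ) ≤ 1 - t) ht.1.le (by ring)
      have heq : (1 - t) • p + t • y = p + t • (y - p) := by
        rw [smul_sub, sub_smul, one_smul]; abel
      rwa [heq] at hmem
    have hle : ⟪gradf p, y - p⟫ ≤ 0 := by
      have htend : Filter.Tendsto (slope (fun t : ℝ => f (p + t • (y - p))) 0)
          (nhdsWithin 0 (Set.Ioi 0)) (nhds (⟪gradf p, y - p⟫)) :=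
        (hasDerivAt_iff_tendsto_slope.1 h2).mono_left
          (nhdsWithin_mono 0 (fun x hx => ne_of_gt hx))
      refine le_of_tendsto htend ?_
      filter_upwards [Ioo_mem_nhdsGT zero_lt_one] with t ht
      have h0 : f (p + (0:ℝ) • (y - p)) = 1 := by simpa using hp
      rw [slope_def_field]
      rw [div_eq_mul_inv]
      apply mul_nonpos_of_nonpos_of_nonneg
      · have := hseg t ht
        simp only [h0]; linarith
      · simp [ht.1.le]
    have := inner_sub_right (𝕜 := ℝ) (gradf p) y p
    linarith [hle, this.symm.le, this.le]
  -- Lagrange multipliers at p₀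
  have lagrange : ∃ T : ℝ, 0 < T ∧ gradf p₀ = T • q := by
    have heuler : ⟪gradf p₀, p₀⟫ = 1 := euler p₀ hp₀N'
    have hopen : IsOpen {x : EuclideanSpace ℝ (Fin d) | x ≠ 0} := isOpen_compl_singleton
    have hmem : {x : EuclideanSpace ℝ (Fin d) | x ≠ 0} ∈ nhds p₀ := hopen.mem_nhds hp₀0
    have hstrict : HasStrictFDerivAt f
        ((InnerProductSpace.toDual ℝ (EuclideanSpace ℝ (Fin d))) (gradf p₀)) p₀ := by
      apply hasStrictFDerivAt_of_hasFDerivAt_of_continuousAt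
        (f' := fun y => (InnerProductSpace.toDual ℝ (EuclideanSpace ℝ (Fin d))) (gradf y))
      · filter_upwards [hmem] with y hy
        exact (hf_grad y hy).hasFDerivAt
      · exact ((InnerProductSpace.toDual ℝ (EuclideanSpace ℝ (Fin d))).continuous.continuousAt).comp
          (hgrad_cont.continuousAt hmem)
    have hφ : HasStrictFDerivAt (fun p : EuclideanSpace ℝ (Fin d) => ⟪q, p⟫) (innerSL ℝ q) p₀ :=
      (innerSL ℝ q).hasStrictFDerivAt
    have hextr : IsLocalExtrOn (fun p : EuclideanSpace ℝ (Fin d) => ⟪q, p⟫)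
        {x : EuclideanSpace ℝ (Fin d) | f x = f p₀} p₀ := by
      rw [hp₀N']
      exact (hp₀max.filter_mono inf_le_right).isExtr
    obtain ⟨a, b, hab, heq⟩ := hextr.exists_multipliers_of_hasStrictFDerivAt_1d hstrict hφ
    have hvec : a • gradf p₀ + b • q = 0 := by
      have happ : ∀ v : EuclideanSpace ℝ (Fin d), a * ⟪gradf p₀, v⟫ + b * ⟪q, v⟫ = 0 := by
        intro v
        have := congrFun (congrArg
          (fun L : EuclideanSpace ℝ (Fin d) →L[ℝ] ℝ => (L : EuclideanSpace ℝ (Fin d) → ℝ)) heq) v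
        simpa [InnerProductSpace.toDual_apply_apply] using this
      have : ⟪a • gradf p₀ + b • q, a • gradf p₀ + b • q⟫ = 0 := by
        rw [inner_add_left, real_inner_smul_left, real_inner_smul_left]
        exact happ _
      exact inner_self_eq_zero.1 this
    have hgrad0 : gradf p₀ ≠ 0 := by
      intro h; rw [h] at heuler; simp at heuler
    have ha : a ≠ 0 := by
      intro h
      rw [h, zero_smul, zero_add] at hvec
      rcases smul_eq_zero.1 hvec with hb | hq0
      · apply hab; simp [h, hb]
      · exact hq hq0
    have hg : gradf p₀ = (-b / a) • q := by
      have h1 : a • gradf p₀ = -(b • q) := by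
        rw [eq_neg_iff_add_eq_zero]; exact hvec
      have h2 := congrArg (fun v : EuclideanSpace ℝ (Fin d) => a⁻¹ • v) h1
      simp only [smul_smul, inv_mul_cancel₀ ha, one_smul, smul_neg] at h2
      rw [h2, ← neg_smul]
      congr 1
      field_simp
    refine ⟨-b / a, ?_, hg⟩
    have h1 : (-b / a) * ⟪q, p₀⟫ = 1 := by
      rw [hg, real_inner_smul_left] at heuler; exact heuler
    by_contra hT
    push_neg at hT
    have := mul_nonpos_of_nonpos_of_nonneg hT hM.le
    linarith
  -- maximality over K of any point with proportional gradient
  have maxK : ∀ p : EuclideanSpace ℝ (Fin d), f p = 1 →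
      (∃ T : ℝ, 0 < T ∧ gradf p = T • q) →
      ∀ y : EuclideanSpace ℝ (Fin d), f y ≤ 1 → ⟪q, y⟫ ≤ ⟪q, p⟫ := by
    rintro p hp ⟨T, hT, hgp⟩ y hy
    have h := support p hp y hy
    rw [hgp, real_inner_smul_left, real_inner_smul_left] at h
    exact le_of_mul_le_mul_left (by linarith [h]) hT
  -- uniqueness
  have uniq : ∀ p : EuclideanSpace ℝ (Fin d),
      (f p = 1 ∧ ∃ T : ℝ, 0 < T ∧ gradf p = T • q) → p = p₀ := by
    rintro p ⟨hp, hT⟩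
    by_contra hne
    have hle1 : ⟪q, p⟫ ≤ ⟪q, p₀⟫ := hp₀max hp
    have hle2 : ⟪q, p₀⟫ ≤ ⟪q, p⟫ := maxK p hp hT p₀ hp₀N'.le
    have hqp : ⟪q, p⟫ = ⟪q, p₀⟫ := le_antisymm hle1 hle2
    set m : EuclideanSpace ℝ (Fin d) := (1/2 : ℝ) • p + (1/2 : ℝ) • p₀ with hm
    have hmint : m ∈ interior {x : EuclideanSpace ℝ (Fin d) | f x ≤ 1} :=
      hconv (Set.mem_setOf.2 hp.le) (Set.mem_setOf.2 hp₀N'.le) hne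
        (by norm_num) (by norm_num) (by norm_num)
    have hqm : ⟪q, m⟫ = ⟪q, p₀⟫ := by
      rw [hm, inner_add_right, real_inner_smul_right, real_inner_smul_right, hqp]
      ring
    have hm0 : m ≠ 0 := by
      intro h
      rw [h, inner_zero_right] at hqm
      linarith
    have hfm : f m < 1 := by
      have hnhds : {x : EuclideanSpace ℝ (Fin d) | f x ≤ 1} ∈ nhds m :=
        mem_interior_iff_mem_nhds.1 hmint
      have hcont : ContinuousAt (fun t : ℝ => t • m) 1 :=
        (continuous_id.smul continuous_const).continuousAt
      have hpre : (fun t : ℝ => t • m) ⁻¹' {x | f x ≤ 1} ∈ nhds 1 := by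
        apply hcont.preimage_mem_nhds
        simpa using hnhds
      have hpre' : (fun t : ℝ => t • m) ⁻¹' {x | f x ≤ 1} ∈ nhdsWithin 1 (Set.Ioi 1) :=
        nhdsWithin_le_nhds hpre
      obtain ⟨t, htK, ht1⟩ := ((Filter.eventually_iff.2 hpre').and
        (Filter.eventually_iff.2 self_mem_nhdsWithin)).exists
      have ht1' : (1:ℝ) < t := ht1
      have : f (t • m) ≤ 1 := htK
      rw [hf_hom t (by linarith) m] at this
      have hfm0 : 0 < f m := hf_pos m hm0
      nlinarith
    have hfm0 : 0 < f m := hf_pos m hm0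
    have hp' : f ((f m)⁻¹ • m) = 1 := hscale m hm0
    have hgt : ⟪q, p₀⟫ < ⟪q, (f m)⁻¹ • m⟫ := by
      rw [real_inner_smul_right, hqm]
      have h1 : (1:ℝ) < (f m)⁻¹ := (one_lt_inv₀ hfm0).2 hfm
      nlinarith
    have hub := hp₀max hp'
    simp only [Set.mem_setOf_eq] at hub
    have : ⟪q, (f m)⁻¹ • m⟫ ≤ ⟪q, p₀⟫ := hub
    linarith
  refine ⟨p₀, ⟨hp₀N', lagrange⟩, uniq, ?_⟩
  -- the supremum
  have hgr : IsGreatest {r : ℝ | ∃ p, f p = 1 ∧ r = ⟪p, q⟫} ⟪p₀, q⟫ := by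
    constructor
    · exact ⟨p₀, hp₀N', rfl⟩
    · rintro r ⟨p, hp, rfl⟩
      rw [show ⟪p, q⟫ = ⟪q, p⟫ from real_inner_comm q p, show ⟪p₀, q⟫ = ⟪q, p₀⟫ from real_inner_comm q p₀]
      exact hp₀max hp
  exact hgr.csSup_eq
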